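/- arXiv:1906.11926 — 2 statements merged into one kernel-verified Lean document; each statement's English description precedes it below -/
import Mathlib

section
/- For k ≥ 1, let a = 2^{2^k} − 1 and for J ⊆ {1,...,k−1} let c_J = ∏_{j∈J}(2^{2^j}+1) and b_J = (c_J − a/c_J)/2. Then the map J ↦ b_J is injective, and moreover b_J ≠ −b_K for all subsets J, K; in particular all 2^k points (±b_J/2, 0) are pairwise distinct. -/
/-- Product of Fermat numbers over `range n` equals `2^(2^n) - 1` in ℤ. -/
lemma prod_fermat_range (n : ℕ) :
    ∏ j ∈ Finset.range n, ((2 : ℤ) ^ (2 ^ j) + 1) = 2 ^ (2 ^ n) - 1 := by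
  induction n with
  | zero => simp
  | succ n ih =>
      rw [Finset.prod_range_succ, ih]
      have : (2 : ℤ) ^ (2 ^ (n + 1)) = (2 ^ (2 ^ n)) ^ 2 := by
        rw [← pow_mul, pow_succ]
      rw [this]; ring

/-- Injectivity of products of Fermat numbers. -/
lemma prod_fermat_inj {J K : Finset ℕ}
    (h : ∏ j ∈ J, Nat.fermatNumber j = ∏ j ∈ K, Nat.fermatNumber j) : J = K := by
  have key : ∀ J K : Finset ℕ,
      (∏ j ∈ J, Nat.fermatNumber j = ∏ j ∈ K, Nat.fermatNumber j) → J ⊆ K := by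
    intro J K h j hj
    by_contra hjK
    have hdvd : Nat.fermatNumber j ∣ ∏ i ∈ K, Nat.fermatNumber i := by
      rw [← h]; exact Finset.dvd_prod_of_mem _ hj
    have hcop : Nat.Coprime (Nat.fermatNumber j) (∏ i ∈ K, Nat.fermatNumber i) :=
      Nat.Coprime.prod_right fun i hi =>
        Nat.coprime_fermatNumber_fermatNumber (fun e => hjK (e ▸ hi))
    have : Nat.fermatNumber j = 1 := Nat.Coprime.eq_one_of_dvd hcop hdvd
    simp [Nat.fermatNumber] at this
  exact Finset.Subset.antisymm (key J K h) (key K J h.symm)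

/-- For k ≥ 1, a = 2^{2^k} − 1, c_J = ∏_{j∈J}(2^{2^j}+1) and
b_J = (c_J − a/c_J)/2 over subsets J ⊆ {1,…,k−1}: the map J ↦ b_J is injective
and b_J ≠ −b_K for all such subsets J, K. -/
theorem b_J_injective_and_no_negation (k : ℕ) (hk : 1 ≤ k)
    (a : ℤ) (ha : a = 2 ^ (2 ^ k) - 1)
    (c : Finset ℕ → ℤ) (hc : ∀ J, c J = ∏ j ∈ J, ((2 : ℤ) ^ (2 ^ j) + 1))
    (b : Finset ℕ → ℤ) (hbdef : ∀ J, b J = (c J - a / c J) / 2) :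
    ∀ J K : Finset ℕ, J ⊆ Finset.Icc 1 (k - 1) → K ⊆ Finset.Icc 1 (k - 1) →
      (b J = b K → J = K) ∧ b J ≠ -b K := by
  -- a = 3 * product over Icc 1 (k-1)
  have hrange : Finset.range k = insert 0 (Finset.Icc 1 (k - 1)) := by
    ext x
    simp only [Finset.mem_range, Finset.mem_insert, Finset.mem_Icc]
    omega
  have hafull : a = 3 * ∏ j ∈ Finset.Icc 1 (k - 1), ((2 : ℤ) ^ (2 ^ j) + 1) := by
    rw [ha, ← prod_fermat_range k, hrange, Finset.prod_insert (by simp)]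
    norm_num
  -- positivity of c
  have hcpos : ∀ J : Finset ℕ, 0 < c J := by
    intro J
    rw [hc]
    exact Finset.prod_pos fun j _ => by positivity
  -- divisibility: c J ∣ a for J ⊆ Icc 1 (k-1)
  have hcdvd : ∀ J : Finset ℕ, J ⊆ Finset.Icc 1 (k - 1) → c J ∣ a := by
    intro J hJ
    rw [hafull, hc]
    exact Dvd.dvd.mul_left
      (Finset.prod_dvd_prod_of_subset J _ _ hJ) 3
  -- c J odd
  have hcodd : ∀ J : Finset ℕ, Odd (c J) := by
    intro J
    rw [hc]
    refine Finset.prod_induction _ Odd (fun x y => Odd.mul) odd_one ?_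
    intro j _
    exact (Even.add_one (by
      have : (2:ℤ)^(2^j) = 2 * 2^(2^j - 1) := by
        rw [← pow_succ']
        congr 1
        have := Nat.one_le_two_pow (n := j)
        omega
      exact this ▸ even_two_mul _))
  have haodd : Odd a := by
    rw [ha]
    refine Even.sub_odd ?_ odd_one
    have : (2:ℤ)^(2^k) = 2 * 2^(2^k - 1) := by
      rw [← pow_succ']
      congr 1
      have := Nat.one_le_two_pow (n := k)
      omega
    exact this ▸ even_two_mul _
  -- key facts about b
  have hb2 : ∀ J : Finset ℕ, J ⊆ Finset.Icc 1 (k - 1) →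
      2 * b J = c J - a / c J ∧ c J * (a / c J) = a ∧ Odd (a / c J) := by
    intro J hJ
    have hmul : c J * (a / c J) = a := Int.mul_ediv_cancel' (hcdvd J hJ)
    have hodd : Odd (a / c J) := by
      rcases Int.even_or_odd (a / c J) with he | ho
      · exfalso
        have : Even a := by rw [← hmul]; exact he.mul_left _
        exact (Int.not_odd_iff_even.mpr this) haodd
      · exact ho
    refine ⟨?_, hmul, hodd⟩
    rw [hbdef]
    refine Int.mul_ediv_cancel' ?_
    rcases (hcodd J) with ⟨m, hm⟩
    rcases hodd with ⟨n, hn⟩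
    exact ⟨m - n, by omega⟩
  -- c is injective on subsets (via ℕ Fermat products)
  have hcinj : ∀ J K : Finset ℕ, c J = c K → J = K := by
    intro J K h
    have : ((∏ j ∈ J, Nat.fermatNumber j : ℕ) : ℤ)
        = ((∏ j ∈ K, Nat.fermatNumber j : ℕ) : ℤ) := by
      push_cast [Nat.fermatNumber]
      rw [← hc, ← hc]; exact h
    exact prod_fermat_inj (Nat.cast_injective this)
  -- 3 does not divide c J for J ⊆ Icc 1 (k-1)
  have hc3 : ∀ J : Finset ℕ, J ⊆ Finset.Icc 1 (k - 1) → ¬ (3 : ℤ) ∣ c J := by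
    intro J hJ hdvd
    have hcast : c J = ((∏ j ∈ J, Nat.fermatNumber j : ℕ) : ℤ) := by
      push_cast [Nat.fermatNumber]; rw [hc]
    have h3 : 3 ∣ ∏ j ∈ J, Nat.fermatNumber j := by
      have := hcast ▸ hdvd
      exact_mod_cast this
    have hcop : Nat.Coprime 3 (∏ j ∈ J, Nat.fermatNumber j) := by
      refine Nat.Coprime.prod_right fun j hj => ?_
      have hj1 : 1 ≤ j := (Finset.mem_Icc.mp (hJ hj)).1
      refine (Nat.Prime.coprime_iff_not_dvd (by norm_num)).mpr ?_
      intro hd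
      have hmod : Nat.fermatNumber j % 3 = 2 := by
        unfold Nat.fermatNumber
        have h2j : 2 ^ j = 2 * 2 ^ (j - 1) := by
          rw [← pow_succ']
          congr 1; omega
        rw [h2j, pow_mul]
        have : (2^2)^(2^(j-1)) % 3 = 1 % 3 := by
          rw [Nat.pow_mod]; norm_num
        omega
      omega
    have := Nat.Coprime.eq_one_of_dvd hcop h3
    omega
  intro J K hJ hK
  obtain ⟨hbJ, hmJ, _⟩ := hb2 J hJ
  obtain ⟨hbK, hmK, _⟩ := hb2 K hK
  constructor
  · intro heq
    apply hcinj
    have h1 : c J - a / c J = c K - a / c K := by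
      rw [← hbJ, ← hbK, heq]
    have hzero : (c J - c K) * (c J * c K + a) = 0 := by
      linear_combination (c J * c K) * h1 + c K * hmJ - c J * hmK
    rcases mul_eq_zero.mp hzero with h | h
    · linarith
    · exfalso
      have hapos : 0 < a := by
        rw [ha]
        have : (2:ℤ) ≤ 2 ^ (2 ^ k) := le_self_pow₀ (by norm_num) (by positivity)
        linarith
      nlinarith [hcpos J, hcpos K]
  · intro heq
    have h1 : (c J - a / c J) + (c K - a / c K) = 0 := by
      rw [← hbJ, ← hbK, heq]; ring
    have hzero : (c J + c K) * (c J * c K - a) = 0 := by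
      linear_combination (c J * c K) * h1 + c J * hmK + c K * hmJ
    rcases mul_eq_zero.mp hzero with h | h
    · nlinarith [hcpos J, hcpos K]
    · have hprod : c J * c K = a := by linarith
      have h3a : (3 : ℤ) ∣ a := ⟨_, hafull⟩
      rw [← hprod] at h3a
      rcases (Int.Prime.dvd_mul' (by norm_num) h3a) with h | h
      · exact hc3 J hJ h
      · exact hc3 K hK h
end

section
/- There exists a dense subset P of the unit circle in ℝ² such that for any two points P₁, P₂ ∈ P, the Euclidean distance |P₁P₂| is rational. -/
noncomputable def pt (a b : ℝ) : EuclideanSpace ℝ (Fin 2) :=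
  (WithLp.equiv 2 (Fin 2 → ℝ)).symm ![a, b]

@[simp] lemma pt_zero (a b : ℝ) : pt a b 0 = a := rfl
@[simp] lemma pt_one (a b : ℝ) : pt a b 1 = b := rfl

lemma pt_eta (w : EuclideanSpace ℝ (Fin 2)) : pt (w 0) (w 1) = w := by
  ext i; fin_cases i <;> rfl

lemma dist_pt (a b c d : ℝ) :
    dist (pt a b) (pt c d) = Real.sqrt ((a - c)^2 + (b - d)^2) := by
  rw [EuclideanSpace.dist_eq]
  norm_num [Fin.sum_univ_two, Real.dist_eq, sq_abs]

lemma mem_sphere_iff (w : EuclideanSpace ℝ (Fin 2)) :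
    w ∈ Metric.sphere (0 : EuclideanSpace ℝ (Fin 2)) 1 ↔ (w 0)^2 + (w 1)^2 = 1 := by
  rw [Metric.mem_sphere, ← pt_eta w, show (0 : EuclideanSpace ℝ (Fin 2)) = pt 0 0 by ext i; fin_cases i <;> rfl,
    dist_pt]
  simp only [pt_zero, pt_one, sub_zero]
  constructor
  · intro h
    have := congrArg (· ^ 2) h
    rw [Real.sq_sqrt (by positivity)] at this
    simpa using this
  · intro h
    rw [h, Real.sqrt_one]

/-- Rational points on the unit circle. -/
def Qset : Set (EuclideanSpace ℝ (Fin 2)) :=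
  {p | ∃ a b : ℚ, (a : ℝ)^2 + (b : ℝ)^2 = 1 ∧ p = pt a b}

/-- Angle-doubling (complex squaring) map. -/
noncomputable def dbl (p : EuclideanSpace ℝ (Fin 2)) : EuclideanSpace ℝ (Fin 2) :=
  pt ((p 0)^2 - (p 1)^2) (2 * p 0 * p 1)

lemma continuous_pt : Continuous fun q : ℝ × ℝ => pt q.1 q.2 := by
  apply Continuous.comp (EuclideanSpace.equiv (Fin 2) ℝ).symm.continuous
  refine continuous_pi fun i => ?_
  fin_cases i
  · exact continuous_fst
  · exact continuous_snd

lemma continuous_apply' (i : Fin 2) : Continuous fun p : EuclideanSpace ℝ (Fin 2) => p i :=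
  (EuclideanSpace.proj i).continuous

lemma continuous_dbl : Continuous dbl := by
  unfold dbl
  exact continuous_pt.comp (Continuous.prodMk
    (((continuous_apply' 0).pow 2).sub ((continuous_apply' 1).pow 2))
    ((continuous_const.mul (continuous_apply' 0)).mul (continuous_apply' 1)))

/-- Tangent half-angle parametrization. -/
noncomputable def g (t : ℝ) : EuclideanSpace ℝ (Fin 2) :=
  pt ((1 - t^2)/(1 + t^2)) (2*t/(1 + t^2))

lemma continuous_g : Continuous g := by
  have h : ∀ t : ℝ, 1 + t^2 ≠ 0 := fun t => by positivity
  unfold g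
  have hc : Continuous fun t : ℝ => ((1 - t^2)/(1 + t^2), 2*t/(1 + t^2)) :=
    Continuous.prodMk (Continuous.div (by continuity) (by continuity) h)
      (Continuous.div (by continuity) (by continuity) h)
  exact continuous_pt.comp hc

lemma g_rat_mem (q : ℚ) : g q ∈ Qset := by
  have h : ((1:ℚ) + q^2) ≠ 0 := by positivity
  refine ⟨(1 - q^2)/(1 + q^2), 2*q/(1 + q^2), ?_, ?_⟩
  · have h' : ((1:ℝ) + (q:ℝ)^2) ≠ 0 := by positivity
    push_cast
    field_simp
    ring
  · unfold g
    push_cast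
    rfl

lemma g_mem_closure (t : ℝ) : g t ∈ closure Qset := by
  have h1 : t ∈ closure (Set.range ((↑) : ℚ → ℝ)) := by
    rw [Rat.denseRange_cast.closure_range]; trivial
  have h2 : g t ∈ g '' closure (Set.range ((↑) : ℚ → ℝ)) := ⟨t, h1, rfl⟩
  have h3 := image_closure_subset_closure_image (f := g) continuous_g
    (s := Set.range ((↑) : ℚ → ℝ))
  have h4 : g '' Set.range ((↑) : ℚ → ℝ) ⊆ Qset := by
    rintro _ ⟨_, ⟨q, rfl⟩, rfl⟩; exact g_rat_mem q
  exact closure_mono h4 (h3 h2)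

lemma g_eq (x y : ℝ) (h : x^2 + y^2 = 1) (hx : x ≠ -1) : g (y/(1+x)) = pt x y := by
  have h1 : 1 + x ≠ 0 := fun H => hx (by linarith)
  unfold g
  have h2 : 1 + (y/(1+x))^2 = 2/(1+x) := by
    field_simp
    linear_combination h
  have h3 : 1 - (y/(1+x))^2 = 2*x/(1+x) := by
    field_simp
    linear_combination (-1)*h
  rw [h2, h3]
  congr 1
  all_goals field_simp

lemma pt_mem_closure (x y : ℝ) (h : x^2 + y^2 = 1) (hx : x ≠ -1) :
    pt x y ∈ closure Qset := g_eq x y h hx ▸ g_mem_closure (y/(1+x))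

/-- There is a dense subset of the unit circle all of whose pairwise distances
are rational. -/
theorem exists_dense_rational_distance_subset_of_circle :
    ∃ P : Set (EuclideanSpace ℝ (Fin 2)),
      P ⊆ Metric.sphere (0 : EuclideanSpace ℝ (Fin 2)) 1 ∧
      Metric.sphere (0 : EuclideanSpace ℝ (Fin 2)) 1 ⊆ closure P ∧
      ∀ p ∈ P, ∀ q ∈ P, ∃ r : ℚ, dist p q = (r : ℝ) := by
  refine ⟨dbl '' Qset, ?_, ?_, ?_⟩
  · rintro _ ⟨_, ⟨a, b, hab, rfl⟩, rfl⟩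
    rw [mem_sphere_iff]
    unfold dbl
    simp only [pt_zero, pt_one]
    nlinarith [hab]
  · intro w hw
    rw [mem_sphere_iff] at hw
    have key : ∃ z, z ∈ closure Qset ∧ dbl z = w := by
      by_cases hx : w 0 = -1
      · refine ⟨pt 0 1, subset_closure ⟨0, 1, by norm_num, by push_cast; rfl⟩, ?_⟩
        have hv : w 1 = 0 := by nlinarith [hw, hx]
        rw [← pt_eta w, hx, hv]
        unfold dbl
        simp only [pt_zero, pt_one]
        norm_num
      · have hu : -1 < w 0 := lt_of_le_of_ne (by nlinarith [hw]) (Ne.symm hx)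
        have h1 : (0:ℝ) < 1 + w 0 := by linarith
        set X := Real.sqrt ((1 + w 0)/2) with hXdef
        have hX : X^2 = (1 + w 0)/2 := Real.sq_sqrt (by linarith)
        have hXpos : 0 < X := Real.sqrt_pos.mpr (by linarith)
        set Y := w 1 / (2*X) with hYdef
        have hcirc : X^2 + Y^2 = 1 := by
          rw [hYdef]
          field_simp
          nlinarith [hX, hw]
        refine ⟨pt X Y, pt_mem_closure X Y hcirc (ne_of_gt (by linarith : (-1:ℝ) < X)), ?_⟩
        rw [← pt_eta w]
        unfold dbl
        simp only [pt_zero, pt_one]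
        have hX0 : X ≠ 0 := ne_of_gt hXpos
        have e2 : 2 * X * Y = w 1 := by rw [hYdef]; field_simp
        have e1 : X^2 - Y^2 = w 0 := by
          rw [hYdef]
          field_simp
          linear_combination (4*X^2 + 2 - 2*(w 0)) * hX - hw
        rw [e1, e2]
    obtain ⟨z, hz1, hz2⟩ := key
    exact image_closure_subset_closure_image continuous_dbl ⟨z, hz1, hz2⟩
  · rintro _ ⟨_, ⟨a, b, hab, rfl⟩, rfl⟩ _ ⟨_, ⟨c, d, hcd, rfl⟩, rfl⟩
    refine ⟨|2*(b*c - a*d)|, ?_⟩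
    unfold dbl
    simp only [pt_zero, pt_one]
    rw [dist_pt]
    have key : (((a:ℝ)^2 - (b:ℝ)^2) - ((c:ℝ)^2 - (d:ℝ)^2))^2 +
        (2*(a:ℝ)*(b:ℝ) - 2*(c:ℝ)*(d:ℝ))^2 = (2*((b:ℝ)*(c:ℝ) - (a:ℝ)*(d:ℝ)))^2 := by
      linear_combination ((a:ℝ)^2+(b:ℝ)^2-(c:ℝ)^2-(d:ℝ)^2) * hab
        - ((a:ℝ)^2+(b:ℝ)^2-(c:ℝ)^2-(d:ℝ)^2) * hcd
    rw [key, Real.sqrt_sq_eq_abs]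
    push_cast
    ring
end
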